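/- Let (L,E,R,∂₂,∂₁,{,}) be a 2-crossed module of commutative algebras. The formula e▶¹_e(e',l,l') = (ee', ∂₁(e)▶l − {e'⊗e}, ∂₁(e)▶l') defines an algebra action of E on the iterated semidirect product (E⋉_{▶'}L)⋉_{▶*}L. -/

import Mathlib

/-- An action of a commutative `k`-algebra `R` on a commutative `k`-algebra `M`:
a `k`-bilinear map satisfying `r▶(mm') = (r▶m)m' = m(r▶m')` and `(rr')▶m = r▶(r'▶m)`. -/
structure AlgAction (k R M : Type*) [CommRing k] [CommRing R] [CommRing M]
    [Algebra k R] [Algebra k M] where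
  act : R →ₗ[k] M →ₗ[k] M
  a1 : ∀ (r : R) (m m' : M), act r (m * m') = act r m * m'
  a1' : ∀ (r : R) (m m' : M), act r (m * m') = m * act r m'
  a2 : ∀ (r r' : R) (m : M), act (r * r') m = act r (act r' m)

/-- A 2-crossed module of commutative `k`-algebras, with Peiffer lifting `lift e e' = {e ⊗ e'}`.
The action `e ▶' l` of `E` on `L` is `lift e (d2 l)` (axiom 2XM5 is definitional). -/
structure TwoCrossedModule (k L E R : Type*) [CommRing k] [CommRing L] [CommRing E] [CommRing R]
    [Algebra k L] [Algebra k E] [Algebra k R] where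
  actE : AlgAction k R E
  actL : AlgAction k R L
  d2 : L →ₗ[k] E
  d1 : E →ₗ[k] R
  d2_mul : ∀ l l' : L, d2 (l * l') = d2 l * d2 l'
  d1_mul : ∀ e e' : E, d1 (e * e') = d1 e * d1 e'
  comp : ∀ l : L, d1 (d2 l) = 0
  d1_act : ∀ (r : R) (e : E), d1 (actE.act r e) = r * d1 e
  d2_act : ∀ (r : R) (l : L), d2 (actL.act r l) = actE.act r (d2 l)
  lift : E →ₗ[k] E →ₗ[k] L
  axm1 : ∀ e e' : E, d2 (lift e e') = e * e' - actE.act (d1 e') e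
  axm2 : ∀ l l' : L, lift (d2 l) (d2 l') = l * l'
  axm3 : ∀ e e' e'' : E, lift e (e' * e'') = lift (e * e') e'' + actL.act (d1 e'') (lift e e')
  axm4 : ∀ (l : L) (e : E), lift (d2 l) e = lift e (d2 l) - actL.act (d1 e) l
  axm6a : ∀ (r : R) (e e' : E), actL.act r (lift e e') = lift (actE.act r e) e'
  axm6b : ∀ (r : R) (e e' : E), actL.act r (lift e e') = lift e (actE.act r e')


section
variable {k L E R : Type*} [CommRing k] [CommRing L] [CommRing E] [CommRing R]
    [Algebra k L] [Algebra k E] [Algebra k R] (T : TwoCrossedModule k L E R)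

/-- `{ee₁ ⊗ ∂l} = ∂₁e ▶ {e₁ ⊗ ∂l} + {e₁⊗e}·l` -/
lemma key1 (e e₁ : E) (l : L) :
    T.lift (e * e₁) (T.d2 l) =
      T.actL.act (T.d1 e) (T.lift e₁ (T.d2 l)) + T.lift e₁ e * l := by
  have h : e * e₁ = T.actE.act (T.d1 e) e₁ + T.d2 (T.lift e₁ e) := by
    rw [T.axm1]; ring
  rw [h, map_add, LinearMap.add_apply, T.axm6a, T.axm2]

/-- `{e₂ ⊗ ∂{e₁⊗e}} = {e₁e₂ ⊗ e}` -/
lemma key2 (e e₁ e₂ : E) :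
    T.lift e₂ (T.d2 (T.lift e₁ e)) = T.lift (e₁ * e₂) e := by
  have h4 : T.lift e₂ (T.d2 (T.lift e₁ e)) =
      T.lift (T.d2 (T.lift e₁ e)) e₂ + T.actL.act (T.d1 e₂) (T.lift e₁ e) := by
    rw [T.axm4]; ring
  have h1 : T.lift (T.d2 (T.lift e₁ e)) e₂ =
      T.lift (e₁ * e) e₂ - T.actL.act (T.d1 e) (T.lift e₁ e₂) := by
    rw [T.axm1, map_sub, LinearMap.sub_apply, T.axm6a]
  have h3 : T.lift (e₁ * e) e₂ =
      T.lift (e₁ * e₂) e + T.actL.act (T.d1 e) (T.lift e₁ e₂)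
        - T.actL.act (T.d1 e₂) (T.lift e₁ e) := by
    have a := T.axm3 e₁ e e₂
    have b := T.axm3 e₁ e₂ e
    rw [mul_comm e e₂] at a
    rw [a] at b
    linear_combination b
  rw [h4, h1, h3]; ring

/-- `{e₂ ⊗ ∂(∂₁e ▶ l)} = ∂₁e ▶ {e₂ ⊗ ∂l}` -/
lemma key4 (e e₂ : E) (l : L) :
    T.lift e₂ (T.d2 (T.actL.act (T.d1 e) l)) =
      T.actL.act (T.d1 e) (T.lift e₂ (T.d2 l)) := by
  rw [T.d2_act, ← T.axm6b]

/-- `{e₁ ⊗ ee'} = ∂₁e ▶ {e₁⊗e'} + {e'e₁ ⊗ e}` -/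
lemma key3 (e e' e₁ : E) :
    T.lift e₁ (e * e') =
      T.actL.act (T.d1 e) (T.lift e₁ e') + T.lift (e' * e₁) e := by
  rw [mul_comm e e', T.axm3, mul_comm e₁ e']; ring
end

/-- `e ▶¹ (e',l,l') = (ee', ∂₁(e)▶l - {e'⊗e}, ∂₁(e)▶l')` is an algebra
action of `E` on `(E ⋉ L) ⋉ L`. -/
theorem stmt10 (k L E R : Type*) [CommRing k] [CommRing L] [CommRing E] [CommRing R]
    [Algebra k L] [Algebra k E] [Algebra k R] (T : TwoCrossedModule k L E R) :
    ∀ (mul3 : E × L × L → E × L × L → E × L × L) (eact : E → E × L × L → E × L × L),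
      (mul3 = fun p q => (p.1 * q.1,
        T.lift p.1 (T.d2 q.2.1) + T.lift q.1 (T.d2 p.2.1) + p.2.1 * q.2.1,
        (T.lift p.1 (T.d2 q.2.2) + p.2.1 * q.2.2)
          + (T.lift q.1 (T.d2 p.2.2) + q.2.1 * p.2.2) + p.2.2 * q.2.2)) →
      (eact = fun e p => (e * p.1, T.actL.act (T.d1 e) p.2.1 - T.lift p.1 e,
        T.actL.act (T.d1 e) p.2.2)) →
      (∀ e e' p, eact (e + e') p = eact e p + eact e' p) ∧
      (∀ e p q, eact e (p + q) = eact e p + eact e q) ∧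
      (∀ (c : k) e p, eact (c • e) p = c • eact e p) ∧
      (∀ (c : k) e p, eact e (c • p) = c • eact e p) ∧
      (∀ e p q, eact e (mul3 p q) = mul3 (eact e p) q) ∧
      (∀ e e' p, eact (e * e') p = eact e (eact e' p)) := by
  intro mul3 eact hm he
  subst hm he
  refine ⟨?_, ?_, ?_, ?_, ?_, ?_⟩
  · rintro e e' ⟨e₁, l₁, m₁⟩
    simp only [Prod.mk_add_mk, Prod.mk.injEq, map_add, LinearMap.add_apply]
    refine ⟨by ring, by ring, trivial⟩
  · rintro e ⟨e₁, l₁, m₁⟩ ⟨e₂, l₂, m₂⟩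
    simp only [Prod.mk_add_mk, Prod.mk.injEq, map_add, LinearMap.add_apply]
    refine ⟨by ring, by ring, trivial⟩
  · rintro c e ⟨e₁, l₁, m₁⟩
    simp only [Prod.smul_mk, Prod.mk.injEq, map_smul, LinearMap.smul_apply,
      smul_mul_assoc, smul_sub]
  · rintro c e ⟨e₁, l₁, m₁⟩
    simp only [Prod.smul_mk, Prod.mk.injEq, map_smul, LinearMap.smul_apply,
      mul_smul_comm, smul_sub]
  · rintro e ⟨e₁, l₁, m₁⟩ ⟨e₂, l₂, m₂⟩
    simp only [Prod.mk.injEq, map_add, LinearMap.add_apply, map_sub,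
      LinearMap.sub_apply]
    refine ⟨by ring, ?_, ?_⟩
    · rw [key1 T e e₁ l₂, key4 T e e₂ l₁, key2 T e e₁ e₂,
        T.actL.a1 (T.d1 e) l₁ l₂]
      ring
    · rw [key1 T e e₁ m₂, key4 T e e₂ m₁,
        T.actL.a1 (T.d1 e) l₁ m₂, T.actL.a1' (T.d1 e) l₂ m₁,
        T.actL.a1 (T.d1 e) m₁ m₂]
      ring
  · rintro e e' ⟨e₁, l₁, m₁⟩
    simp only [Prod.mk.injEq, T.d1_mul, T.actL.a2, map_sub]
    refine ⟨by ring, ?_, trivial⟩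
    rw [key3 T e e' e₁]
    ring
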